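/- Let n ≥ 2 be an integer, F a field of characteristic zero, and f : F → ℂ a quadratic function. Then f(x^n) = f(x)^n holds for all x ∈ F if and only if there exist ring homomorphisms φ₁, φ₂ : F → ℂ such that f(x) = f(1)·φ₁(x)φ₂(x) for all x ∈ F, where either f(1) = 0 (so f ≡ 0) or f(1)^{n−1} = 1. -/

import Mathlib

set_option linter.unusedSectionVars false
set_option maxHeartbeats 1000000
open Polynomial Finset

private lemma poly_ext (p q : Polynomial ℂ) (h : ∀ r : ℚ, p.eval (r:ℂ) = q.eval (r:ℂ)) : p = q := by
  have hpq : p - q = 0 := by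
    apply Polynomial.eq_zero_of_infinite_isRoot
    apply Set.Infinite.mono (s := Set.range ((↑) : ℚ → ℂ))
    · rintro _ ⟨r, rfl⟩
      simp [Polynomial.IsRoot, h r]
    · exact Set.infinite_range_of_injective Rat.cast_injective
  exact sub_eq_zero.mp hpq

private lemma anti1 : Finset.HasAntidiagonal.antidiagonal 1 = ({(0,1),(1,0)} : Finset (ℕ×ℕ)) := by decide
private lemma anti2 : Finset.HasAntidiagonal.antidiagonal 2 = ({(0,2),(1,1),(2,0)} : Finset (ℕ×ℕ)) := by decide

private lemma mul_coeff1 (p q : Polynomial ℂ) :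
    (p*q).coeff 1 = p.coeff 0 * q.coeff 1 + p.coeff 1 * q.coeff 0 := by
  rw [Polynomial.coeff_mul, anti1]; simp

private lemma mul_coeff2 (p q : Polynomial ℂ) :
    (p*q).coeff 2 = p.coeff 0 * q.coeff 2 + p.coeff 1 * q.coeff 1 + p.coeff 2 * q.coeff 0 := by
  rw [Polynomial.coeff_mul, anti2, Finset.sum_insert (by decide), Finset.sum_insert (by decide),
    Finset.sum_singleton]
  ring

private lemma pow_coeff0 (p : Polynomial ℂ) (M : ℕ) : (p^M).coeff 0 = p.coeff 0 ^ M := by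
  induction M with
  | zero => simp
  | succ M ih => rw [pow_succ, Polynomial.mul_coeff_zero, ih, pow_succ]

private lemma pow_coeff1 (p : Polynomial ℂ) (M : ℕ) :
    (p^(M+1)).coeff 1 = (M+1 : ℂ) * p.coeff 0 ^ M * p.coeff 1 := by
  induction M with
  | zero => simp
  | succ M ih =>
    rw [pow_succ, mul_coeff1, ih, pow_coeff0]
    push_cast
    ring

private lemma pow_coeff2 (p : Polynomial ℂ) (M : ℕ) :
    (p^(M+1)).coeff 2 = (M+1 : ℂ) * p.coeff 0 ^ M * p.coeff 2
      + ((Nat.choose (M+1) 2 : ℕ) : ℂ) * p.coeff 0 ^ (M-1) * p.coeff 1 ^ 2 := by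
  induction M with
  | zero => simp
  | succ M ih =>
    rw [pow_succ, mul_coeff2, ih, pow_coeff1, pow_coeff0]
    have hch : ((M+2).choose 2 : ℂ) = ((M+1).choose 2 : ℂ) + (M+1 : ℂ) := by
      rw [show (M+2).choose 2 = (M+1).choose 1 + (M+1).choose 2 from Nat.choose_succ_succ _ _]
      push_cast [Nat.choose_one_right]
      ring
    rcases M with _ | K
    · simp only [show Nat.choose 1 2 = 0 from rfl] at *
      push_cast [hch] at *
      linear_combination hch * p.coeff 1 ^ 2
    · have hs : K + 1 + 1 - 1 = K + 1 := rfl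
      have hs2 : K + 1 - 1 = K := rfl
      rw [hs, hs2, hch]
      push_cast
      ring

section
variable {F : Type*} [Field F] [CharZero F]

private def Bhom (B : F → F → ℂ) (hadd : ∀ x y z : F, B (x + y) z = B x z + B y z) (v : F) :
    F →+ ℂ := AddMonoidHom.mk' (fun u => B u v) (fun a b => hadd a b v)

private lemma Brat (B : F → F → ℂ) (hadd : ∀ x y z : F, B (x + y) z = B x z + B y z)
    (q : ℚ) (u v : F) : B ((q:F) * u) v = (q:ℂ) * B u v := by
  have h := map_ratCast_smul (Bhom B hadd v) F ℂ q u
  simpa [Bhom, smul_eq_mul] using h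

private lemma bexpand_pow (a b : F) (N : ℕ) (q : ℚ) :
    (a + (q:F)*b)^N = ∑ k ∈ range (N+1), ((q^k * N.choose k : ℚ) : F) * (b^k * a^(N-k)) := by
  rw [add_comm a, add_pow]
  refine Finset.sum_congr rfl fun k _ => ?_
  push_cast
  ring

variable (B : F → F → ℂ) (hsymm : ∀ x y : F, B x y = B y x)
    (hadd : ∀ x y z : F, B (x + y) z = B x z + B y z)
include hsymm hadd

private lemma Brat' (q : ℚ) (u v : F) : B u ((q:F) * v) = (q:ℂ) * B u v := by
  rw [hsymm, Brat B hadd, hsymm]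

private lemma Badd' (x y z : F) : B x (y + z) = B x y + B x z := by
  rw [hsymm, hadd, hsymm, hsymm z]

private lemma Bsum (N N' : ℕ) (u v : ℕ → F) :
    B (∑ k ∈ range N, u k) (∑ j ∈ range N', v j)
      = ∑ k ∈ range N, ∑ j ∈ range N', B (u k) (v j) := by
  have h1 := map_sum (Bhom B hadd (∑ j ∈ range N', v j)) u (range N)
  simp only [Bhom, AddMonoidHom.mk'_apply] at h1
  rw [h1]
  refine Finset.sum_congr rfl fun k _ => ?_
  have h2 := map_sum (Bhom B hadd (u k)) v (range N')
  simp only [Bhom, AddMonoidHom.mk'_apply] at h2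
  rw [hsymm, h2]
  exact Finset.sum_congr rfl fun j _ => hsymm _ _

private lemma keyexpand (a b a' b' y : F) (N N' : ℕ) (q : ℚ) :
    B ((a + (q:F)*b)^N) (((a' + (q:F)*b')^N') * y)
      = Polynomial.eval (q:ℂ) (∑ k ∈ range (N+1), ∑ j ∈ range (N'+1),
          Polynomial.C ((N.choose k : ℂ) * (N'.choose j : ℂ)
            * B (b^k * a^(N-k)) (b'^j * a'^(N'-j) * y)) * Polynomial.X ^ (k+j)) := by
  rw [bexpand_pow, bexpand_pow, Finset.sum_mul, Bsum B hsymm hadd]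
  rw [Polynomial.eval_finset_sum]
  refine Finset.sum_congr rfl fun k hk => ?_
  rw [Polynomial.eval_finset_sum]
  refine Finset.sum_congr rfl fun j hj => ?_
  rw [mul_assoc, Brat B hadd, Brat' B hsymm hadd]
  simp only [eval_mul, eval_C, eval_pow, eval_X]
  push_cast
  ring

private lemma quadexpand (a b : F) (q : ℚ) :
    B (a + (q:F)*b) (a + (q:F)*b) = B a a + 2*(q:ℂ)*B a b + (q:ℂ)^2 * B b b := by
  rw [hadd, Badd' B hsymm hadd, Badd' B hsymm hadd, Brat B hadd, Brat' B hsymm hadd,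
    Brat B hadd, Brat' B hsymm hadd, hsymm b a]
  ring

private lemma linexpand (a b y : F) (q : ℚ) :
    B (a + (q:F)*b) y = B a y + (q:ℂ) * B b y := by
  rw [hadd, Brat B hadd]



end

private lemma dsum_pad (e : ℕ → ℕ → ℂ) (N N' : ℕ)
    (he : ∀ k j, N < k ∨ N' < j → e k j = 0) :
    (∑ k ∈ range (N+1), ∑ j ∈ range (N'+1), C (e k j) * X^(k+j))
      = ∑ k ∈ range (N+3), ∑ j ∈ range (N'+3), C (e k j) * X^(k+j) := by
  have h1 : ∀ k, (∑ j ∈ range (N'+1), C (e k j) * X^(k+j))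
      = ∑ j ∈ range (N'+3), C (e k j) * X^(k+j) := by
    intro k
    apply Finset.sum_subset
    · apply Finset.range_subset_range.mpr; omega
    · intro j _ hj
      rw [he k j (Or.inr (by simp at hj ⊢; omega))]
      simp
  calc (∑ k ∈ range (N+1), ∑ j ∈ range (N'+1), C (e k j) * X^(k+j))
      = ∑ k ∈ range (N+1), ∑ j ∈ range (N'+3), C (e k j) * X^(k+j) :=
        Finset.sum_congr rfl fun k _ => h1 k
    _ = _ := by
        apply Finset.sum_subset
        · apply Finset.range_subset_range.mpr; omega
        · intro k _ hk
          apply Finset.sum_eq_zero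
          intro j _
          rw [he k j (Or.inl (by simp at hk ⊢; omega))]
          simp

private lemma dsum_coeff_aux (e : ℕ → ℕ → ℂ) (N N' : ℕ) (i : ℕ) :
    (∑ k ∈ range (N+3), ∑ j ∈ range (N'+3), C (e k j) * X^(k+j)).coeff i
      = ∑ k ∈ range (N+3), ∑ j ∈ range (N'+3), (if k + j = i then e k j else 0) := by
  rw [Polynomial.finset_sum_coeff]
  refine Finset.sum_congr rfl fun k _ => ?_
  rw [Polynomial.finset_sum_coeff]
  refine Finset.sum_congr rfl fun j _ => ?_
  rw [Polynomial.coeff_C_mul, Polynomial.coeff_X_pow]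
  simp [eq_comm]

private lemma inner_sum_eq (e : ℕ → ℕ → ℂ) (N' : ℕ) (k i : ℕ) (hk : k ≤ i) (hi : i ≤ 2) :
    (∑ j ∈ range (N'+3), if k + j = i then e k j else 0) = e k (i - k) := by
  rw [Finset.sum_eq_single (i - k)]
  · simp [Nat.add_sub_cancel' hk]
  · intro j _ hj
    rw [if_neg (by omega)]
  · intro hmem
    exfalso; apply hmem; simp; omega

private lemma inner_sum_zero (e : ℕ → ℕ → ℂ) (N' : ℕ) (k i : ℕ) (hk : i < k) :
    (∑ j ∈ range (N'+3), if k + j = i then e k j else 0) = 0 := by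
  apply Finset.sum_eq_zero
  intro j _
  rw [if_neg (by omega)]

private lemma outer_peel (g : ℕ → ℂ) (N : ℕ) :
    ∑ k ∈ range (N+3), g k = (∑ k ∈ range N, g (k+3)) + g 2 + g 1 + g 0 := by
  rw [show N + 3 = (N+2)+1 from rfl, Finset.sum_range_succ' g (N+2),
    show N + 2 = (N+1)+1 from rfl, Finset.sum_range_succ',
    Finset.sum_range_succ']

private lemma dsum_coeff0 (e : ℕ → ℕ → ℂ) (N N' : ℕ) :
    (∑ k ∈ range (N+3), ∑ j ∈ range (N'+3), C (e k j) * X^(k+j)).coeff 0 = e 0 0 := by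
  rw [dsum_coeff_aux, outer_peel]
  rw [inner_sum_eq e N' 0 0 (by omega) (by omega)]
  rw [inner_sum_zero e N' 1 0 (by omega), inner_sum_zero e N' 2 0 (by omega)]
  rw [Finset.sum_eq_zero (fun k _ => inner_sum_zero e N' (k+3) 0 (by omega))]
  ring

private lemma dsum_coeff1 (e : ℕ → ℕ → ℂ) (N N' : ℕ) :
    (∑ k ∈ range (N+3), ∑ j ∈ range (N'+3), C (e k j) * X^(k+j)).coeff 1
      = e 0 1 + e 1 0 := by
  rw [dsum_coeff_aux, outer_peel]
  rw [inner_sum_eq e N' 0 1 (by omega) (by omega), inner_sum_eq e N' 1 1 (by omega) (by omega)]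
  rw [inner_sum_zero e N' 2 1 (by omega)]
  rw [Finset.sum_eq_zero (fun k _ => inner_sum_zero e N' (k+3) 1 (by omega))]
  norm_num
  ring

private lemma dsum_coeff2 (e : ℕ → ℕ → ℂ) (N N' : ℕ) :
    (∑ k ∈ range (N+3), ∑ j ∈ range (N'+3), C (e k j) * X^(k+j)).coeff 2
      = e 0 2 + e 1 1 + e 2 0 := by
  rw [dsum_coeff_aux, outer_peel]
  rw [inner_sum_eq e N' 0 2 (by omega) (by omega), inner_sum_eq e N' 1 2 (by omega) (by omega),
    inner_sum_eq e N' 2 2 (by omega) (by omega)]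
  rw [Finset.sum_eq_zero (fun k _ => inner_sum_zero e N' (k+3) 2 (by omega))]
  norm_num
  ring

private lemma trin_coeff0 (a b c' : ℂ) : (C a + C b * X + C c' * X^2).coeff 0 = a := by simp
private lemma trin_coeff1 (a b c' : ℂ) : (C a + C b * X + C c' * X^2).coeff 1 = b := by simp
private lemma trin_coeff2 (a b c' : ℂ) : (C a + C b * X + C c' * X^2).coeff 2 = c' := by simp

section
variable {F : Type*} [Field F] [CharZero F]
variable (B : F → F → ℂ) (hsymm : ∀ x y : F, B x y = B y x)
    (hadd : ∀ x y z : F, B (x + y) z = B x z + B y z)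
include hsymm hadd

private lemma lemI (f : F → ℂ) (hf : ∀ x, f x = B x x)
    (m : ℕ) (h : ∀ x : F, f (x ^ (m+2)) = f x ^ (m+2)) (x y : F) :
    B (x^(m+2)) (x^(m+1) * y) = (f x)^(m+1) * B x y := by
  classical
  set e : ℕ → ℕ → ℂ := fun k j => ((m+2).choose k : ℂ) * ((m+2).choose j : ℂ)
    * B (y^k * x^(m+2-k)) (y^j * x^(m+2-j) * 1) with he_def
  have he0 : ∀ k j, m+2 < k ∨ m+2 < j → e k j = 0 := by
    intro k j hkj
    rcases hkj with hk | hk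
    · simp [he_def, Nat.choose_eq_zero_of_lt hk]
    · simp [he_def, Nat.choose_eq_zero_of_lt hk]
  have hSR : (∑ k ∈ range (m+2+3), ∑ j ∈ range (m+2+3), C (e k j) * X^(k+j))
      = (C (f x) + C (2 * B x y) * X + C (f y) * X^2)^(m+2) := by
    rw [← dsum_pad e (m+2) (m+2) he0]
    apply poly_ext
    intro q
    have h1 := keyexpand B hsymm hadd x y x y 1 (m+2) (m+2) q
    rw [mul_one] at h1
    rw [← h1, ← hf, h]
    have hq : f (x + (q:F)*y) = f x + 2*(q:ℂ)*B x y + (q:ℂ)^2 * f y := by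
      rw [hf, quadexpand B hsymm hadd, ← hf, ← hf]
    rw [hq]
    simp only [eval_pow, eval_add, eval_mul, eval_C, eval_X]
    ring
  have hc1 := congrArg (fun p => p.coeff 1) hSR
  simp only [dsum_coeff1] at hc1
  rw [show m+2 = (m+1)+1 from rfl, pow_coeff1] at hc1
  rw [trin_coeff0, trin_coeff1] at hc1
  have he01 : e 0 1 = ((m+2:ℕ):ℂ) * B (x^(m+2)) (x^(m+1) * y) := by
    simp only [he_def, pow_zero, pow_one, one_mul, mul_one, Nat.choose_zero_right,
      Nat.choose_one_right, Nat.sub_zero, Nat.cast_one]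
    rw [show m+2-1 = m+1 from rfl, mul_comm y (x^(m+1))]
  have he10 : e 1 0 = ((m+2:ℕ):ℂ) * B (x^(m+2)) (x^(m+1) * y) := by
    simp only [he_def, pow_zero, pow_one, one_mul, mul_one, Nat.choose_zero_right,
      Nat.choose_one_right, Nat.sub_zero, Nat.cast_one]
    rw [show m+2-1 = m+1 from rfl, mul_comm y (x^(m+1)), hsymm]
  rw [he01, he10] at hc1
  have h2 : ((m+2:ℕ):ℂ) ≠ 0 := Nat.cast_ne_zero.mpr (by omega)
  have key : ((m+2:ℕ):ℂ) * (2 * (B (x^(m+2)) (x^(m+1) * y) - (f x)^(m+1) * B x y)) = 0 := by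
    push_cast at hc1 ⊢
    linear_combination hc1
  rcases mul_eq_zero.mp key with h3 | h3
  · exact absurd h3 h2
  · exact sub_eq_zero.mp (by linear_combination h3 / 2)


private lemma lemE (f : F → ℂ) (hf : ∀ x, f x = B x x)
    (m : ℕ) (h : ∀ x : F, f (x ^ (m+2)) = f x ^ (m+2)) (x y : F) :
    (B 1 y = (B 1 1)^(m+1) * B 1 y)
    ∧ (((m+1:ℕ):ℂ) * B 1 (x*y) + ((m+2:ℕ):ℂ) * B x y
        = (B 1 1)^(m+1) * B x y + 2*((m+1:ℕ):ℂ)*(B 1 1)^m * B 1 x * B 1 y)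
    ∧ (((m+2).choose 2 : ℂ) * B (x^2) y + ((m+2:ℕ):ℂ)*((m+1:ℕ):ℂ) * B x (x*y)
        + ((m+1).choose 2 : ℂ) * B 1 (x^2*y)
        = (((m+1:ℕ):ℂ) * (B 1 1)^m * f x + ((m+1).choose 2 : ℂ) * (B 1 1)^(m-1) * (2 * B 1 x)^2) * B 1 y
          + ((m+1:ℕ):ℂ) * (B 1 1)^m * (2 * B 1 x) * B x y) := by
  classical
  set e : ℕ → ℕ → ℂ := fun k j => ((m+2).choose k : ℂ) * ((m+1).choose j : ℂ)
    * B (x^k * (1:F)^(m+2-k)) (x^j * (1:F)^(m+1-j) * y) with he_def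
  have he0 : ∀ k j, m+2 < k ∨ m+1 < j → e k j = 0 := by
    intro k j hkj
    rcases hkj with hk | hk
    · simp [he_def, Nat.choose_eq_zero_of_lt hk]
    · simp [he_def, Nat.choose_eq_zero_of_lt hk]
  have hSR : (∑ k ∈ range (m+2+3), ∑ j ∈ range (m+1+3), C (e k j) * X^(k+j))
      = (C (B 1 1) + C (2 * B 1 x) * X + C (f x) * X^2)^(m+1) * (C (B 1 y) + C (B x y) * X) := by
    rw [← dsum_pad e (m+2) (m+1) he0]
    apply poly_ext
    intro q
    have h1 := keyexpand B hsymm hadd 1 x 1 x y (m+2) (m+1) q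
    rw [← h1]
    have h2 := lemI B hsymm hadd f hf m h (1 + (q:F)*x) y
    rw [h2]
    have hq : f (1 + (q:F)*x) = B 1 1 + 2*(q:ℂ)*B 1 x + (q:ℂ)^2 * B x x := by
      rw [hf, quadexpand B hsymm hadd]
    rw [hq, linexpand B hsymm hadd, hf x]
    simp only [eval_mul, eval_pow, eval_add, eval_C, eval_X]
    ring
  have hL0 : (C (B 1 y) + C (B x y) * X).coeff 0 = B 1 y := by simp
  have hL1 : (C (B 1 y) + C (B x y) * X).coeff 1 = B x y := by simp
  have hL2 : (C (B 1 y) + C (B x y) * X).coeff 2 = 0 := by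
    simp [Polynomial.coeff_C]
  have hT0 := trin_coeff0 (B 1 1) (2 * B 1 x) (f x)
  have hT1 := trin_coeff1 (B 1 1) (2 * B 1 x) (f x)
  have hT2 := trin_coeff2 (B 1 1) (2 * B 1 x) (f x)
  refine ⟨?_, ?_, ?_⟩
  · have hc := congrArg (fun p => p.coeff 0) hSR
    simp only [dsum_coeff0] at hc
    rw [Polynomial.mul_coeff_zero, pow_coeff0, hT0, hL0] at hc
    have he00 : e 0 0 = B 1 y := by
      simp [he_def]
    rw [he00] at hc
    exact hc
  · have hc := congrArg (fun p => p.coeff 1) hSR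
    simp only [dsum_coeff1] at hc
    rw [mul_coeff1, pow_coeff0, pow_coeff1, hT0, hT1, hL0, hL1] at hc
    have he01 : e 0 1 = ((m+1:ℕ):ℂ) * B 1 (x*y) := by
      simp [he_def]
    have he10 : e 1 0 = ((m+2:ℕ):ℂ) * B x y := by
      simp [he_def]
    rw [he01, he10] at hc
    push_cast at hc ⊢
    linear_combination hc
  · have hc := congrArg (fun p => p.coeff 2) hSR
    simp only [dsum_coeff2] at hc
    rw [mul_coeff2, pow_coeff0, pow_coeff1, pow_coeff2, hT0, hT1, hT2, hL0, hL1, hL2] at hc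
    have he02 : e 0 2 = ((m+1).choose 2 : ℂ) * B 1 (x^2*y) := by
      simp [he_def]
    have he11 : e 1 1 = ((m+2:ℕ):ℂ)*((m+1:ℕ):ℂ) * B x (x*y) := by
      simp [he_def]
    have he20 : e 2 0 = ((m+2).choose 2 : ℂ) * B (x^2) y := by
      simp [he_def]
    rw [he02, he11, he20] at hc
    push_cast at hc ⊢
    linear_combination hc

end

theorem stmt10 (n : ℕ) (hn : 2 ≤ n) (F : Type*) [Field F] [CharZero F] (B : F → F → ℂ)
    (hsymm : ∀ x y : F, B x y = B y x)
    (hadd : ∀ x y z : F, B (x + y) z = B x z + B y z)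
    (f : F → ℂ) (hf : ∀ x, f x = B x x) :
    (∀ x : F, f (x ^ n) = f x ^ n) ↔
      ∃ φ₁ φ₂ : F → ℂ,
        (∀ x y : F, φ₁ (x + y) = φ₁ x + φ₁ y) ∧ (∀ x y : F, φ₁ (x * y) = φ₁ x * φ₁ y) ∧
        (∀ x y : F, φ₂ (x + y) = φ₂ x + φ₂ y) ∧ (∀ x y : F, φ₂ (x * y) = φ₂ x * φ₂ y) ∧
        (∀ x : F, f x = f 1 * (φ₁ x * φ₂ x)) ∧
        ((f 1 = 0 ∧ ∀ x : F, f x = 0) ∨ f 1 ^ (n - 1) = 1) := by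
  constructor
  · intro h
    obtain ⟨m, rfl⟩ : ∃ m, n = m + 2 := ⟨n - 2, by omega⟩
    have hMne : ((m+1:ℕ):ℂ) ≠ 0 := Nat.cast_ne_zero.mpr (by omega)
    have hM2ne : ((m+2:ℕ):ℂ) ≠ 0 := Nat.cast_ne_zero.mpr (by omega)
    set c : ℂ := B 1 1 with hc_def
    have hf1 : f 1 = c := hf 1
    have E1 : ∀ y : F, B 1 y = c^(m+1) * B 1 y :=
      fun y => (lemE B hsymm hadd f hf m h 1 y).1
    have E2 : ∀ x y : F, ((m+1:ℕ):ℂ) * B 1 (x*y) + ((m+2:ℕ):ℂ) * B x y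
        = c^(m+1) * B x y + 2*((m+1:ℕ):ℂ)*c^m * B 1 x * B 1 y :=
      fun x y => (lemE B hsymm hadd f hf m h x y).2.1
    have E3 : ∀ x y : F, ((m+2).choose 2 : ℂ) * B (x^2) y + ((m+2:ℕ):ℂ)*((m+1:ℕ):ℂ) * B x (x*y)
        + ((m+1).choose 2 : ℂ) * B 1 (x^2*y)
        = (((m+1:ℕ):ℂ) * c^m * f x + ((m+1).choose 2 : ℂ) * c^(m-1) * (2 * B 1 x)^2) * B 1 y
          + ((m+1:ℕ):ℂ) * c^m * (2 * B 1 x) * B x y :=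
      fun x y => (lemE B hsymm hadd f hf m h x y).2.2
    by_cases hc : c = 0
    · -- degenerate case : everything vanishes
      have hA : ∀ y : F, B 1 y = 0 := by
        intro y
        have h1 := E1 y
        rw [hc, zero_pow (by omega : m + 1 ≠ 0), zero_mul] at h1
        exact h1
      have hB0 : ∀ x y : F, B x y = 0 := by
        intro x y
        have h2 := E2 x y
        rw [hc, hA, hA, hA, zero_pow (by omega : m + 1 ≠ 0)] at h2
        have h3 : ((m+2:ℕ):ℂ) * B x y = 0 := by linear_combination h2
        rcases mul_eq_zero.mp h3 with h4 | h4
        · exact absurd h4 hM2ne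
        · exact h4
      refine ⟨0, 0, by simp, by simp, by simp, by simp, ?_, Or.inl ⟨?_, ?_⟩⟩
      · intro x; simp [hf, hB0]
      · rw [hf1, hc]
      · intro x; rw [hf, hB0]
    · -- main case
      have hM1 : ((m:ℂ)+1) ≠ 0 := by push_cast at hMne; exact hMne
      have hM2 : ((m:ℂ)+2) ≠ 0 := by push_cast at hM2ne; exact hM2ne
      have hM3 : ((m:ℂ)+3) ≠ 0 := by
        have h0 : ((m+3:ℕ):ℂ) ≠ 0 := Nat.cast_ne_zero.mpr (by omega)
        push_cast at h0; exact h0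
      have hc1 : c^(m+1) = 1 := by
        have h1 := E1 1
        rw [← hc_def] at h1
        have h2 : c * (c^(m+1) - 1) = 0 := by linear_combination -h1
        rcases mul_eq_zero.mp h2 with h3 | h3
        · exact absurd h3 hc
        · linear_combination h3
      have hcc : c^m * c = 1 := by rw [← pow_succ]; exact hc1
      set ψ : F → ℂ := fun u => B 1 u / c with hψ_def
      have hψB : ∀ u : F, B 1 u = c * ψ u := by
        intro u; simp only [hψ_def]; field_simp
      have hψ1 : ψ 1 = 1 := by
        simp only [hψ_def, ← hc_def]; field_simp
      have hψadd : ∀ u v : F, ψ (u+v) = ψ u + ψ v := by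
        intro u v; simp only [hψ_def]; rw [Badd' B hsymm hadd]; ring
      have hBψ : ∀ x y : F, B x y = c*(2*ψ x*ψ y - ψ (x*y)) := by
        intro x y
        have h2 := E2 x y
        rw [hc1, hψB (x*y), hψB x, hψB y] at h2
        push_cast at h2
        have key : ((m:ℂ)+1) * (B x y - c*(2*ψ x*ψ y - ψ (x*y))) = 0 := by
          linear_combination h2 + 2*((m:ℂ)+1)*c*(ψ x)*(ψ y)*hcc
        rcases mul_eq_zero.mp key with h3 | h3
        · exact absurd h3 hM1
        · linear_combination h3
      have hch2 : 2 * (((m+2).choose 2 : ℕ):ℂ) = ((m:ℂ)+2) * ((m:ℂ)+1) := by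
        have hdvd : 2 ∣ (m+2) * (m+2-1) := by
          rcases Nat.even_or_odd m with ⟨t, rfl⟩ | ⟨t, rfl⟩
          · exact Dvd.dvd.mul_right ⟨t+1, by omega⟩ _
          · exact Dvd.dvd.mul_left ⟨t+1, by omega⟩ _
        have hnat : 2 * ((m+2).choose 2) = (m+2) * (m+1) := by
          rw [Nat.choose_two_right, Nat.mul_div_cancel' hdvd]
          rfl
        exact_mod_cast hnat
      have hch1 : 2 * (((m+1).choose 2 : ℕ):ℂ) = ((m:ℂ)+1) * (m:ℂ) := by
        have hdvd : 2 ∣ (m+1) * (m+1-1) := by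
          rcases Nat.even_or_odd m with ⟨t, rfl⟩ | ⟨t, rfl⟩
          · exact Dvd.dvd.mul_left ⟨t, by omega⟩ _
          · exact Dvd.dvd.mul_right ⟨t+1, by omega⟩ _
        have hnat : 2 * ((m+1).choose 2) = (m+1) * m := by
          rw [Nat.choose_two_right, Nat.mul_div_cancel' hdvd]
          rfl
        exact_mod_cast hnat
      have hfix : (((m+1).choose 2 : ℕ):ℂ) * c^(m-1) * c^3 = (((m+1).choose 2 : ℕ):ℂ) * c := by
        rcases m with _ | k
        · norm_num
        · rw [show k+1-1 = k from rfl]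
          have h5 : c^k * c^3 = c := by linear_combination c*hcc
          linear_combination (((k+1+1).choose 2 : ℕ):ℂ) * h5
      have T2 : ∀ x y : F, ψ (x^2*y) = ψ (x^2)*ψ y + 2*ψ x*ψ (x*y) - 2*ψ x*ψ x*ψ y := by
        intro x y
        have h3 := E3 x y
        have hBx2y : B (x^2) y = c*(2*ψ (x^2)*ψ y - ψ (x^2*y)) := hBψ (x^2) y
        have hBxxy : B x (x*y) = c*(2*ψ x*ψ (x*y) - ψ (x^2*y)) := by
          rw [hBψ x (x*y), show x*(x*y) = x^2*y from by ring]
        have hfx : f x = c*(2*ψ x*ψ x - ψ (x^2)) := by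
          rw [hf, hBψ x x, show x*x = x^2 from (sq x).symm]
        rw [hBx2y, hBxxy, hψB (x^2*y), hψB x, hψB y, hfx, hBψ x y] at h3
        push_cast at h3
        have key2 : ((m:ℂ)+1)*((m:ℂ)+3)*c*(ψ (x^2*y)
            - (ψ (x^2)*ψ y + 2*ψ x*ψ (x*y) - 2*ψ x*ψ x*ψ y)) = 0 := by
          linear_combination (-1:ℂ)*h3
            - c*(((m:ℂ)+1)*((2*ψ x*ψ x - ψ (x^2))*ψ y + 2*ψ x*(2*ψ x*ψ y - ψ (x*y))))*hcc
            - (4*ψ x*ψ x*ψ y)*hfix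
            + ((2*ψ (x^2)*ψ y - ψ (x^2*y))*c/2)*hch2
            + ((ψ (x^2*y) - 4*ψ x*ψ x*ψ y)*c/2)*hch1
        have hne : ((m:ℂ)+1)*((m:ℂ)+3)*c ≠ 0 := mul_ne_zero (mul_ne_zero hM1 hM3) hc
        have h6 := (mul_eq_zero.mp key2).resolve_left hne
        linear_combination h6
      have T3 : ∀ x y z : F, ψ (x*y*z)
          = ψ (x*y)*ψ z + ψ (x*z)*ψ y + ψ (y*z)*ψ x - 2*ψ x*ψ y*ψ z := by
        intro x y z
        have hXY := T2 (x+y) z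
        have hX := T2 x z
        have hY := T2 y z
        rw [show (x+y)^2*z = x^2*z + (x*y*z + (x*y*z + y^2*z)) from by ring,
          hψadd, hψadd, hψadd,
          show (x+y)^2 = x^2 + (x*y + (x*y + y^2)) from by ring,
          hψadd, hψadd, hψadd,
          show (x+y)*z = x*z + y*z from by ring, hψadd, hψadd] at hXY
        linear_combination (hXY - hX - hY)/2
      set D : F → F → ℂ := fun u v => ψ (u*v) - ψ u * ψ v with hD_def
      have hD' : ∀ p q : F, ψ (p*q) = D p q + ψ p * ψ q := by
        intro p q; simp only [hD_def]; ring
      have hDsymm : ∀ p q : F, D p q = D q p := by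
        intro p q; simp only [hD_def]; rw [mul_comm p q, mul_comm (ψ p)]
      have hco : ∀ x y z : F, D (x*y) z = D x z * ψ y + D y z * ψ x := by
        intro x y z; simp only [hD_def]
        linear_combination T3 x y z
      have rank1 : ∀ a b u v : F, D a b * D u v = D a u * D b v := by
        intro a b u v
        have h1 : ψ (a*b*(u*v)) = D (a*b) (u*v) + ψ (a*b) * ψ (u*v) := hD' _ _
        rw [hco a b (u*v), hDsymm a (u*v), hDsymm b (u*v), hco u v a, hco u v b,
          hD' a b, hD' u v, hDsymm u a, hDsymm v a, hDsymm u b, hDsymm v b] at h1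
        have h2 : ψ (a*u*(b*v)) = D (a*u) (b*v) + ψ (a*u) * ψ (b*v) := hD' _ _
        rw [hco a u (b*v), hDsymm a (b*v), hDsymm u (b*v), hco b v a, hco b v u,
          hD' a u, hD' b v, hDsymm b a, hDsymm v a, hDsymm v u] at h2
        rw [show a*b*(u*v) = a*u*(b*v) from by ring] at h1
        linear_combination h2 - h1
      have hfψ : ∀ x : F, f x = c * (2*ψ x*ψ x - ψ (x*x)) := by
        intro x; rw [hf, hBψ x x]
      by_cases hD0 : ∀ u v : F, D u v = 0
      · refine ⟨ψ, ψ, hψadd, ?_, hψadd, ?_, ?_, Or.inr ?_⟩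
        · intro x y
          have := hD0 x y
          simp only [hD_def] at this
          linear_combination this
        · intro x y
          have := hD0 x y
          simp only [hD_def] at this
          linear_combination this
        · intro x
          have h1 := hfψ x
          have h2 := hD0 x x
          simp only [hD_def] at h2
          rw [hf1]
          linear_combination h1 - c*h2
        · show f 1 ^ (m+1) = 1
          rw [hf1]; exact hc1
      · push_neg at hD0
        obtain ⟨x₀, y₀, hxy⟩ := hD0
        have hww : D x₀ x₀ ≠ 0 := by
          intro h0
          have h1 := rank1 x₀ y₀ x₀ y₀
          rw [h0, zero_mul] at h1
          exact hxy (by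
            have := mul_self_eq_zero.mp h1
            exact this)
        obtain ⟨s, hs⟩ := IsAlgClosed.exists_pow_nat_eq (D x₀ x₀) (n := 2) (by norm_num)
        have hsne : s ≠ 0 := by
          intro h0; rw [h0] at hs; exact hww (by rw [← hs]; ring)
        set δ : F → ℂ := fun u => D u x₀ / s with hδ_def
        have hδD : ∀ u : F, D u x₀ = s * δ u := by
          intro u; simp only [hδ_def]; field_simp
        have hδδ : ∀ u v : F, δ u * δ v = D u v := by
          intro u v
          have h1 := rank1 u x₀ v x₀
          have key : s^2 * (δ u * δ v - D u v) = 0 := by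
            linear_combination (-s*δ v)*hδD u + (-(D u x₀))*hδD v + h1 + (-(D u v))*hs
          have h4 := (mul_eq_zero.mp key).resolve_left (pow_ne_zero 2 hsne)
          linear_combination h4
        have hδmul : ∀ u v : F, δ (u*v) = δ u * ψ v + δ v * ψ u := by
          intro u v
          have h1 := hco u v x₀
          rw [hδD, hδD, hδD] at h1
          have h2 : s * (δ (u*v) - (δ u * ψ v + δ v * ψ u)) = 0 := by linear_combination h1
          rcases mul_eq_zero.mp h2 with h3 | h3
          · exact absurd h3 hsne
          · linear_combination h3
        have hδadd : ∀ u v : F, δ (u+v) = δ u + δ v := by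
          intro u v
          simp only [hδ_def, hD_def]
          rw [show (u+v)*x₀ = u*x₀ + v*x₀ from by ring, hψadd, hψadd]
          field_simp
          ring
        refine ⟨fun u => ψ u + δ u, fun u => ψ u - δ u, ?_, ?_, ?_, ?_, ?_, Or.inr ?_⟩
        · intro x y
          show ψ (x+y) + δ (x+y) = (ψ x + δ x) + (ψ y + δ y)
          rw [hψadd, hδadd]; ring
        · intro x y
          show ψ (x*y) + δ (x*y) = (ψ x + δ x) * (ψ y + δ y)
          have h1 := hD' x y
          have h2 := hδmul x y
          have h3 := hδδ x y
          linear_combination h1 + h2 - h3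
        · intro x y
          show ψ (x+y) - δ (x+y) = (ψ x - δ x) + (ψ y - δ y)
          rw [hψadd, hδadd]; ring
        · intro x y
          show ψ (x*y) - δ (x*y) = (ψ x - δ x) * (ψ y - δ y)
          have h1 := hD' x y
          have h2 := hδmul x y
          have h3 := hδδ x y
          linear_combination h1 - h2 - h3
        · intro x
          have h1 := hfψ x
          have h2 := hD' x x
          have h3 := hδδ x x
          rw [hf1]
          linear_combination h1 - c*h2 + c*h3
        · show f 1 ^ (m+1) = 1
          rw [hf1]; exact hc1
  · rintro ⟨φ₁, φ₂, h1a, h1m, h2a, h2m, hprod, hdisj⟩ x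
    obtain ⟨k, hk⟩ : ∃ k, n = k + 1 := ⟨n - 1, by omega⟩
    have hp1 : ∀ (u:F) (j:ℕ), φ₁ (u^(j+1)) = φ₁ u^(j+1) := by
      intro u j
      induction j with
      | zero => rw [pow_one, pow_one]
      | succ j ih => rw [pow_succ, h1m, ih, ← pow_succ]
    have hp2 : ∀ (u:F) (j:ℕ), φ₂ (u^(j+1)) = φ₂ u^(j+1) := by
      intro u j
      induction j with
      | zero => rw [pow_one, pow_one]
      | succ j ih => rw [pow_succ, h2m, ih, ← pow_succ]
    rcases hdisj with ⟨h0, hall⟩ | hpow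
    · rw [hall, hall, zero_pow (by omega : n ≠ 0)]
    · rw [hk, hprod, hp1, hp2, hprod x, mul_pow, mul_pow]
      have hkn : f 1 ^ (k+1) = f 1 := by
        rw [hk] at hpow
        simp only [Nat.add_sub_cancel] at hpow
        rw [pow_succ, hpow, one_mul]
      rw [hkn]
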